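/- Suppose μ, ν are probability measures on a Polish metric space (E,d) with d bounded measurable, and μ satisfies the L¹-transport-entropy inequality W_{1,d}(μ,ν) ≤ √(2C H(ν|μ)) for all ν. Then for every Lipschitz function F : E → ℝ with ‖F‖_Lip ≤ 1 and every t > 0, μ(F − ∫F dμ ≥ t) ≤ exp(−t²/(2C)). -/

import Mathlib

open MeasureTheory

/-- The `L¹`-Wasserstein "distance" associated to a cost `ρ`, defined as the infimum of
`∫ ρ(x,y) dπ` over all couplings `π` of `μ` and `ν`. -/
noncomputable def W1 {X : Type*} [MeasurableSpace X] (ρ : X → X → ℝ)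
    (μ ν : Measure X) : ℝ :=
  ⨅ π : {π : Measure (X × X) //
      IsProbabilityMeasure π ∧ π.map Prod.fst = μ ∧ π.map Prod.snd = ν},
    ∫ p, ρ p.1 p.2 ∂(π : Measure (X × X))

/-- `ρ` is a metric on `X`. -/
def IsDist {X : Type*} (ρ : X → X → ℝ) : Prop :=
  (∀ x, ρ x x = 0) ∧ (∀ x y, 0 ≤ ρ x y) ∧ (∀ x y, ρ x y = ρ y x) ∧
  (∀ x y z, ρ x z ≤ ρ x y + ρ y z) ∧ (∀ x y, ρ x y = 0 → x = y)

open Classical in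
/-- Relative entropy (Kullback information) `H(ν|μ)`, valued in `[0,∞]`. -/
noncomputable def relEnt {X : Type*} [MeasurableSpace X] (ν μ : Measure X) : ENNReal :=
  if ν ≪ μ ∧ Integrable (fun x => Real.log (ν.rnDeriv μ x).toReal) ν
  then ENNReal.ofReal (∫ x, Real.log (ν.rnDeriv μ x).toReal ∂ν)
  else ⊤

/-- concentration from the `T₁` transport-entropy inequality, Bobkov–Götze:
if `μ ∈ T₁(C)` on `(E,d)`, then every `1`-Lipschitz `F` satisfies the Gaussian
concentration bound `μ(F − μ(F) ≥ t) ≤ exp(−t²/(2C))`. -/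

lemma integrable_of_bounded {X : Type*} [MeasurableSpace X] {μ : Measure X}
    [IsFiniteMeasure μ] {f : X → ℝ} (hf : Measurable f) (B : ℝ) (hB : ∀ x, |f x| ≤ B) :
    Integrable f μ := by
  refine (integrable_const B).mono' hf.aestronglyMeasurable ?_
  filter_upwards with x using (by simpa using hB x)

lemma integral_sub_le_W1 {X : Type*} [MeasurableSpace X]
    (d : X → X → ℝ) (hd_meas : Measurable (fun p : X × X => d p.1 p.2))
    (D : ℝ) (hd_bdd : ∀ x y, |d x y| ≤ D)
    (G : X → ℝ) (hG : Measurable G) (B : ℝ) (hGb : ∀ x, |G x| ≤ B)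
    (hGL : ∀ p : X × X, G p.2 - G p.1 ≤ d p.1 p.2)
    (μ ν : Measure X) [IsProbabilityMeasure μ] [IsProbabilityMeasure ν] :
    (∫ x, G x ∂ν) - ∫ x, G x ∂μ ≤ W1 d μ ν := by
  have hne : Nonempty {π : Measure (X × X) //
      IsProbabilityMeasure π ∧ π.map Prod.fst = μ ∧ π.map Prod.snd = ν} := by
    refine ⟨⟨μ.prod ν, inferInstance, ?_, ?_⟩⟩
    · rw [show (Prod.fst : X × X → X) = fun p => p.1 from rfl, ← Measure.fst]; exact Measure.fst_prod
    · rw [show (Prod.snd : X × X → X) = fun p => p.2 from rfl, ← Measure.snd]; exact Measure.snd_prod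
  refine le_ciInf fun π => ?_
  obtain ⟨π, hπ, h1, h2⟩ := π
  have hi1 : Integrable (fun p : X × X => G p.1) π :=
    integrable_of_bounded (hG.comp measurable_fst) B (fun p => hGb p.1)
  have hi2 : Integrable (fun p : X × X => G p.2) π :=
    integrable_of_bounded (hG.comp measurable_snd) B (fun p => hGb p.2)
  have e1 : ∫ x, G x ∂μ = ∫ p : X × X, G p.1 ∂π := by
    rw [← h1, integral_map measurable_fst.aemeasurable hG.aestronglyMeasurable]
  have e2 : ∫ x, G x ∂ν = ∫ p : X × X, G p.2 ∂π := by
    rw [← h2, integral_map measurable_snd.aemeasurable hG.aestronglyMeasurable]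
  rw [e1, e2, ← integral_sub hi2 hi1]
  exact integral_mono (hi2.sub hi1)
    (integrable_of_bounded hd_meas D (fun p => hd_bdd p.1 p.2)) hGL

lemma laplace_bound {X : Type*} [MeasurableSpace X]
    (d : X → X → ℝ) (hd_meas : Measurable (fun p : X × X => d p.1 p.2))
    (D : ℝ) (hd_bdd : ∀ x y, |d x y| ≤ D)
    (μ : Measure X) (hμ : IsProbabilityMeasure μ) (C : ℝ) (hC : 0 < C)
    (hT1 : ∀ ν : Measure X, IsProbabilityMeasure ν → relEnt ν μ ≠ ⊤ →
      W1 d μ ν ≤ Real.sqrt (2 * C * (relEnt ν μ).toReal))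
    (G : X → ℝ) (hG : Measurable G) (B : ℝ) (hGb : ∀ x, |G x| ≤ B)
    (hGL : ∀ p : X × X, G p.2 - G p.1 ≤ d p.1 p.2)
    (hG0 : ∫ x, G x ∂μ = 0) (l : ℝ) (hl : 0 < l) :
    ∫ x, Real.exp (l * G x) ∂μ ≤ Real.exp (l ^ 2 * C / 2) := by
  set Z := ∫ x, Real.exp (l * G x) ∂μ with hZ
  have hexp_meas : Measurable fun x => Real.exp (l * G x) :=
    (Real.measurable_exp.comp (hG.const_mul l))
  have hexp_bdd : ∀ x, |Real.exp (l * G x)| ≤ Real.exp (|l| * B) := by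
    intro x
    rw [abs_of_pos (Real.exp_pos _)]
    apply Real.exp_le_exp.2
    calc l * G x ≤ |l * G x| := le_abs_self _
    _ = |l| * |G x| := abs_mul _ _
    _ ≤ |l| * B := by
        exact mul_le_mul_of_nonneg_left (hGb x) (abs_nonneg l)
  have hexp_int : Integrable (fun x => Real.exp (l * G x)) μ :=
    integrable_of_bounded hexp_meas _ hexp_bdd
  have hZpos : 0 < Z := integral_exp_pos hexp_int
  set f := fun x => Real.exp (l * G x) / Z with hf
  have hf_nonneg : ∀ x, 0 ≤ f x := fun x => div_nonneg (Real.exp_pos _).le hZpos.le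
  have hf_meas : Measurable fun x => ENNReal.ofReal (f x) :=
    (hexp_meas.div_const Z).ennreal_ofReal
  have hf_int : Integrable f μ := hexp_int.div_const Z
  set ν := μ.withDensity (fun x => ENNReal.ofReal (f x)) with hν
  have hf_one : ∫ x, f x ∂μ = 1 := by
    rw [hf]
    simp only [integral_div, ← hZ]
    rw [div_self hZpos.ne']
  have hν_prob : IsProbabilityMeasure ν := by
    constructor
    rw [hν, withDensity_apply _ MeasurableSet.univ, Measure.restrict_univ,
      ← ofReal_integral_eq_lintegral_ofReal hf_int (Filter.Eventually.of_forall hf_nonneg),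
      hf_one]
    simp
  have hac : ν ≪ μ := withDensity_absolutelyContinuous μ _
  have hrn : ν.rnDeriv μ =ᵐ[μ] fun x => ENNReal.ofReal (f x) :=
    Measure.rnDeriv_withDensity μ hf_meas
  have hrnν : ν.rnDeriv μ =ᵐ[ν] fun x => ENNReal.ofReal (f x) := hac.ae_eq hrn
  have hlog : (fun x => Real.log (ν.rnDeriv μ x).toReal)
      =ᵐ[ν] fun x => l * G x - Real.log Z := by
    filter_upwards [hrnν] with x hx
    rw [hx, ENNReal.toReal_ofReal (hf_nonneg x), hf]
    rw [Real.log_div (Real.exp_ne_zero _) hZpos.ne', Real.log_exp]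
  have hint : Integrable (fun x => Real.log (ν.rnDeriv μ x).toReal) ν := by
    refine (integrable_of_bounded (X := X) (μ := ν)
      (f := fun x => l * G x - Real.log Z) ((hG.const_mul l).sub measurable_const)
      (|l| * B + |Real.log Z|) ?_).congr hlog.symm
    intro x
    calc |l * G x - Real.log Z| ≤ |l * G x| + |Real.log Z| := abs_sub _ _
    _ ≤ |l| * B + |Real.log Z| := by
        rw [abs_mul]
        exact add_le_add_left (mul_le_mul_of_nonneg_left (hGb x) (abs_nonneg l)) _
  set A := ∫ x, G x ∂ν with hA
  have hG_int : Integrable G ν := integrable_of_bounded hG B hGb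
  have hf_pos : ∀ x, 0 < f x := fun x => div_pos (Real.exp_pos _) hZpos
  have hfr_meas : Measurable f := hexp_meas.div_const Z
  set g := fun x => l * G x - Real.log Z with hg
  have hlogf : ∀ x, Real.log (f x) = g x := by
    intro x
    rw [hf, hg]
    simp only
    rw [Real.log_div (Real.exp_ne_zero _) hZpos.ne', Real.log_exp]
  have hg_meas : Measurable g := (hG.const_mul l).sub measurable_const
  have hg_bdd : ∀ x, |g x| ≤ |l| * B + |Real.log Z| := by
    intro x
    calc |l * G x - Real.log Z| ≤ |l * G x| + |Real.log Z| := abs_sub _ _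
    _ ≤ |l| * B + |Real.log Z| := by
        rw [abs_mul]
        exact add_le_add_left (mul_le_mul_of_nonneg_left (hGb x) (abs_nonneg l)) _
  have hνint : ∫ x, g x ∂ν = ∫ x, f x * g x ∂μ := by
    rw [hν]
    have : (fun x => ENNReal.ofReal (f x)) = fun x => ((f x).toNNReal : ENNReal) := rfl
    rw [this, integral_withDensity_eq_integral_smul hfr_meas.real_toNNReal g]
    refine integral_congr_ae (Filter.Eventually.of_forall fun x => ?_)
    simp [NNReal.smul_def, Real.coe_toNNReal _ (hf_nonneg x)]
  have hfg_int : Integrable (fun x => f x * g x) μ := by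
    refine integrable_of_bounded (hfr_meas.mul hg_meas)
      ((Real.exp (|l| * B) / Z) * (|l| * B + |Real.log Z|)) fun x => ?_
    rw [abs_mul]
    refine mul_le_mul ?_ (hg_bdd x) (abs_nonneg _) (by positivity)
    rw [hf, abs_div, abs_of_pos hZpos]
    gcongr
    exact hexp_bdd x
  have hgν_int : Integrable g ν := integrable_of_bounded hg_meas _ hg_bdd
  have hνg : ∫ x, g x ∂ν = l * A - Real.log Z := by
    rw [hg]
    rw [integral_sub (hG_int.const_mul l) (integrable_const _), integral_const_mul,
      integral_const, probReal_univ]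
    simp [hA]
  have hEnt_nonneg : 0 ≤ l * A - Real.log Z := by
    rw [← hνg, hνint]
    have hmono : ∫ x, (f x - 1) ∂μ ≤ ∫ x, f x * g x ∂μ := by
      refine integral_mono (hf_int.sub (integrable_const 1)) hfg_int fun x => ?_
      have h1 : Real.log (f x)⁻¹ ≤ (f x)⁻¹ - 1 :=
        Real.log_le_sub_one_of_pos (inv_pos.2 (hf_pos x))
      rw [Real.log_inv] at h1
      have h2 : 1 - (f x)⁻¹ ≤ Real.log (f x) := by linarith
      have := mul_le_mul_of_nonneg_left h2 (hf_pos x).le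
      rw [mul_sub, mul_inv_cancel₀ (hf_pos x).ne'] at this
      rw [← hlogf x]
      linarith
    rw [integral_sub hf_int (integrable_const 1), integral_const, probReal_univ,
      hf_one] at hmono
    simpa using hmono
  have hrel : relEnt ν μ = ENNReal.ofReal (l * A - Real.log Z) := by
    rw [relEnt, if_pos ⟨hac, hint⟩, integral_congr_ae hlog,
      integral_sub (hG_int.const_mul l) (integrable_const _), integral_const_mul,
      integral_const, probReal_univ]
    simp [hA]
  have hrelne : relEnt ν μ ≠ ⊤ := by rw [hrel]; exact ENNReal.ofReal_ne_top
  have hW := hT1 ν hν_prob hrelne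
  have hAW : A ≤ W1 d μ ν := by
    have := integral_sub_le_W1 d hd_meas D hd_bdd G hG B hGb hGL μ ν
    rwa [hG0, sub_zero, ← hA] at this
  have hlogZ : Real.log Z ≤ l ^ 2 * C / 2 := by
    have hcase : 0 ≤ l * A - Real.log Z := hEnt_nonneg
    have hH : (relEnt ν μ).toReal = l * A - Real.log Z := by
      rw [hrel, ENNReal.toReal_ofReal hcase]
    rw [hH] at hW
    set H := l * A - Real.log Z with hHdef
    have hAs : A ≤ Real.sqrt (2 * C * H) := hAW.trans hW
    set s := Real.sqrt (2 * C * H) with hs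
    have hs2 : s ^ 2 = 2 * C * H := Real.sq_sqrt (by positivity)
    have hsnn : 0 ≤ s := Real.sqrt_nonneg _
    nlinarith [sq_nonneg (l * C - s), mul_le_mul_of_nonneg_left hAs hl.le]
  calc Z = Real.exp (Real.log Z) := (Real.exp_log hZpos).symm
  _ ≤ Real.exp (l ^ 2 * C / 2) := Real.exp_le_exp.2 hlogZ


theorem transport_entropy_concentration
    {E : Type*} [MeasurableSpace E] [TopologicalSpace E] [PolishSpace E] [BorelSpace E]
    (d : E → E → ℝ) (hd : IsDist d)
    (hd_meas : Measurable (fun p : E × E => d p.1 p.2))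
    (D : ℝ) (hd_bdd : ∀ x y, d x y ≤ D)
    (μ : Measure E) (hμ : IsProbabilityMeasure μ)
    (C : ℝ) (hC : 0 < C)
    (hT1 : ∀ ν : Measure E, IsProbabilityMeasure ν → relEnt ν μ ≠ ⊤ →
      W1 d μ ν ≤ Real.sqrt (2 * C * (relEnt ν μ).toReal)) :
    ∀ F : E → ℝ, Measurable F → (∀ a b, |F a - F b| ≤ d a b) →
      ∀ t : ℝ, 0 < t →
        μ {x | t ≤ F x - ∫ y, F y ∂μ} ≤ ENNReal.ofReal (Real.exp (-(t ^ 2) / (2 * C))) := by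
  intro F hF hFL t ht
  obtain ⟨hd_refl, hd_nonneg, hd_symm, hd_tri, hd_sep⟩ := hd
  have hd_abs : ∀ x y, |d x y| ≤ D := fun x y => by
    rw [abs_of_nonneg (hd_nonneg x y)]; exact hd_bdd x y
  have hEne : Nonempty E := by
    by_contra h
    rw [not_nonempty_iff] at h
    have h1 : μ Set.univ = 1 := measure_univ
    rw [Set.univ_eq_empty_iff.2 h] at h1
    simp at h1
  obtain ⟨x₀⟩ := hEne
  have hF_bdd : ∀ x, |F x| ≤ |F x₀| + D := fun x => by
    calc |F x| ≤ |F x - F x₀| + |F x₀| := by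
          have := abs_add_le (F x - F x₀) (F x₀); simpa using this
    _ ≤ D + |F x₀| := add_le_add_left ((hFL x x₀).trans (hd_bdd x x₀)) _
    _ = |F x₀| + D := add_comm _ _
  have hF_int : Integrable F μ := integrable_of_bounded hF _ hF_bdd
  set c := ∫ y, F y ∂μ with hc
  set G := fun x => F x - c with hGdef
  have hG : Measurable G := hF.sub measurable_const
  have hGb : ∀ x, |G x| ≤ |F x₀| + D + |c| := fun x => by
    calc |F x - c| ≤ |F x| + |c| := abs_sub _ _
    _ ≤ |F x₀| + D + |c| := add_le_add_left (hF_bdd x) _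
  have hGL : ∀ p : E × E, G p.2 - G p.1 ≤ d p.1 p.2 := fun p => by
    have : G p.2 - G p.1 = F p.2 - F p.1 := by simp [hGdef]
    rw [this, hd_symm]
    exact (le_abs_self _).trans (hFL p.2 p.1)
  have hG0 : ∫ x, G x ∂μ = 0 := by
    rw [hGdef]
    rw [integral_sub hF_int (integrable_const c), integral_const, probReal_univ]
    simp [hc]
  set l := t / C with hl
  have hlpos : 0 < l := div_pos ht hC
  have hZle := laplace_bound d hd_meas D hd_abs μ hμ C hC hT1 G hG _ hGb hGL hG0 l hlpos
  have hexp_meas : Measurable fun x => Real.exp (l * G x) :=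
    Real.measurable_exp.comp (hG.const_mul l)
  have hexp_int : Integrable (fun x => Real.exp (l * G x)) μ := by
    refine integrable_of_bounded hexp_meas (Real.exp (|l| * (|F x₀| + D + |c|))) fun x => ?_
    rw [abs_of_pos (Real.exp_pos _)]
    apply Real.exp_le_exp.2
    calc l * G x ≤ |l * G x| := le_abs_self _
    _ = |l| * |G x| := abs_mul _ _
    _ ≤ |l| * (|F x₀| + D + |c|) := mul_le_mul_of_nonneg_left (hGb x) (abs_nonneg l)
  have hset : {x | t ≤ F x - ∫ y, F y ∂μ} = {x | t ≤ G x} := rfl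
  have key : ENNReal.ofReal (Real.exp (l * t)) * μ {x | t ≤ G x}
      ≤ ENNReal.ofReal (Real.exp (l ^ 2 * C / 2)) := by
    have markov := mul_meas_ge_le_lintegral₀
      (μ := μ) (hexp_meas.ennreal_ofReal.aemeasurable) (ENNReal.ofReal (Real.exp (l * t)))
    have hsub : μ {x | t ≤ G x}
        ≤ μ {x | ENNReal.ofReal (Real.exp (l * t)) ≤ ENNReal.ofReal (Real.exp (l * G x))} := by
      refine measure_mono fun x hx => ?_
      simp only [Set.mem_setOf_eq] at hx ⊢
      exact ENNReal.ofReal_le_ofReal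
        (Real.exp_le_exp.2 (mul_le_mul_of_nonneg_left hx hlpos.le))
    calc ENNReal.ofReal (Real.exp (l * t)) * μ {x | t ≤ G x}
        ≤ ENNReal.ofReal (Real.exp (l * t)) *
          μ {x | ENNReal.ofReal (Real.exp (l * t)) ≤ ENNReal.ofReal (Real.exp (l * G x))} :=
          mul_le_mul_right hsub _
    _ ≤ ∫⁻ x, ENNReal.ofReal (Real.exp (l * G x)) ∂μ := markov
    _ = ENNReal.ofReal (∫ x, Real.exp (l * G x) ∂μ) :=
        (ofReal_integral_eq_lintegral_ofReal hexp_int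
          (Filter.Eventually.of_forall fun x => (Real.exp_pos _).le)).symm
    _ ≤ ENNReal.ofReal (Real.exp (l ^ 2 * C / 2)) := ENNReal.ofReal_le_ofReal hZle
  have hfactor : Real.exp (l ^ 2 * C / 2)
      = Real.exp (l * t) * Real.exp (-(t ^ 2) / (2 * C)) := by
    rw [← Real.exp_add]
    congr 1
    rw [hl]
    field_simp
    ring
  rw [hset]
  rw [hfactor, ENNReal.ofReal_mul (Real.exp_pos _).le] at key
  exact (ENNReal.mul_le_mul_iff_right (a := ENNReal.ofReal (Real.exp (l * t)))
    (ENNReal.ofReal_pos.2 (Real.exp_pos _)).ne' ENNReal.ofReal_ne_top).1 key
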